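/- For real constants a, b, c, the function φ(y, v) = (|y|+1)^{−a} · (|v|+1)^{−b} · (|y+v|+1)^{−c} is Lebesgue integrable over ℝ² if and only if a + b > 1, a + c > 1, b + c > 1 and a + b + c > 2. -/

import Mathlib

open MeasureTheory Set Real
open scoped ENNReal

namespace IntProdAbs


lemma base_pos (x : ℝ) : (0:ℝ) < |x| + 1 := by positivity
lemma base_one (x : ℝ) : (1:ℝ) ≤ |x| + 1 := by simp [abs_nonneg]

lemma pw_pos (p x : ℝ) : (0:ℝ) < (|x| + 1) ^ (-p) := rpow_pos_of_pos (base_pos x) _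

lemma cont_pw (p : ℝ) : Continuous fun x : ℝ => (|x| + 1) ^ (-p) := by
  apply Continuous.rpow_const (by continuity)
  intro x; exact Or.inl (base_pos x).ne'

/-- comparability bound with factor 4 -/
lemma comp_bound (c : ℝ) {s t : ℝ} (hs : 0 ≤ s) (ht : 0 ≤ t) (h1 : s ≤ 4*t) (h2 : t ≤ 4*s) :
    (s+1) ^ (-c) ≤ 4 ^ |c| * (t+1) ^ (-c) := by
  rcases le_total 0 c with hc | hc
  · rw [abs_of_nonneg hc]
    have hb : (t+1)/4 ≤ s+1 := by linarith
    have h4 : ((t+1)/4 : ℝ) ^ (-c) = 4 ^ c * (t+1) ^ (-c) := by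
      rw [div_eq_mul_inv, Real.mul_rpow (by linarith) (by norm_num),
        Real.inv_rpow (by norm_num), ← Real.rpow_neg (by norm_num), neg_neg]
      ring
    rw [← h4]
    exact rpow_le_rpow_of_nonpos (by positivity) hb (by linarith)
  · rw [abs_of_nonpos hc]
    have h4 : ((4:ℝ)) ^ (-c) * (t+1) ^ (-c) = (4*(t+1)) ^ (-c) := by
      rw [Real.mul_rpow (by norm_num) (by linarith)]
    rw [h4]
    exact rpow_le_rpow (by linarith) (by linarith) (by linarith)

lemma small_bound (a : ℝ) {t : ℝ} (h1 : 1 ≤ t) (h2 : t ≤ 2) :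
    (2:ℝ) ^ (-|a|) ≤ t ^ (-a) := by
  rcases le_total 0 a with ha | ha
  · rw [abs_of_nonneg ha]
    exact rpow_le_rpow_of_nonpos (by linarith) h2 (by linarith)
  · rw [abs_of_nonpos ha, neg_neg]
    calc (2:ℝ) ^ a ≤ 1 := rpow_le_one_of_one_le_of_nonpos (by norm_num) ha
    _ = (1:ℝ) ^ (-a) := (Real.one_rpow _).symm
    _ ≤ t ^ (-a) := rpow_le_rpow (by norm_num) h1 (by linarith)



lemma lint_shift (g : ℝ → ℝ≥0∞) (s : Set ℝ) (hs : MeasurableSet s) :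
    ∫⁻ x in (fun x : ℝ => x + 1) ⁻¹' s, g (x + 1) = ∫⁻ x in s, g x := by
  calc ∫⁻ x in (fun x : ℝ => x + 1) ⁻¹' s, g (x + 1)
      = ∫⁻ x, ((fun x : ℝ => x + 1) ⁻¹' s).indicator (fun x => g (x+1)) x :=
        (lintegral_indicator (hs.preimage (by fun_prop)) _).symm
    _ = ∫⁻ x, (s.indicator g) (x + 1) := rfl
    _ = ∫⁻ x, s.indicator g x := lintegral_add_right_eq_self (s.indicator g) 1
    _ = ∫⁻ x in s, g x := lintegral_indicator hs _

lemma int_neg_set (h : ℝ → ℝ≥0∞) (hm : Measurable h) (he : ∀ x, h (-x) = h x)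
    (s : Set ℝ) (hs : MeasurableSet s) :
    ∫⁻ x in (fun x : ℝ => -x) ⁻¹' s, h x = ∫⁻ x in s, h x := by
  rw [← lintegral_indicator hs, ← lintegral_indicator (hs.preimage measurable_neg),
    ← (Measure.measurePreserving_neg (volume : Measure ℝ)).lintegral_comp (hm.indicator hs)]
  congr 1; funext x
  by_cases hx : -x ∈ s <;> simp [Set.indicator_apply, Set.mem_preimage, hx, he]

lemma int_Ici {p : ℝ} (hp : 1 < p) {R : ℝ} (hR : 0 ≤ R) :
    ∫⁻ x in Ici R, ENNReal.ofReal ((|x|+1)^(-p)) = ENNReal.ofReal ((R+1)^(1-p)/(p-1)) := by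
  have h1 : ∫⁻ x in Ici R, ENNReal.ofReal ((|x|+1)^(-p))
      = ∫⁻ x in Ici R, ENNReal.ofReal ((x+1)^(-p)) :=
    setLIntegral_congr_fun measurableSet_Ici (fun x hx => by
      simp only [abs_of_nonneg (le_trans hR hx)])
  have h2 : (fun x : ℝ => x + 1) ⁻¹' (Ici (R+1)) = Ici R := by
    ext x; simp only [Set.mem_preimage, Set.mem_Ici]; constructor <;> intro <;> linarith
  have h3 : ∫⁻ x in Ici R, ENNReal.ofReal ((x+1)^(-p))
      = ∫⁻ x in Ici (R+1), ENNReal.ofReal (x^(-p)) := by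
    rw [← h2, lint_shift (fun x => ENNReal.ofReal (x^(-p))) _ measurableSet_Ici]
  have h4 : ∫⁻ x in Ici (R+1), ENNReal.ofReal (x^(-p))
      = ∫⁻ x in Ioi (R+1), ENNReal.ofReal (x^(-p)) :=
    (setLIntegral_congr (Ioi_ae_eq_Ici (a := R+1))).symm
  have hInt : IntegrableOn (fun x : ℝ => x ^ (-p)) (Ioi (R+1)) :=
    integrableOn_Ioi_rpow_of_lt (by linarith) (by linarith)
  have hnn : 0 ≤ᵐ[volume.restrict (Ioi (R+1))] fun x : ℝ => x ^ (-p) := by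
    filter_upwards [ae_restrict_mem measurableSet_Ioi] with x hx
    exact rpow_nonneg (le_of_lt (lt_trans (by linarith) hx)) _
  have h5 : ∫⁻ x in Ioi (R+1), ENNReal.ofReal (x^(-p))
      = ENNReal.ofReal (∫ x in Ioi (R+1), x ^ (-p)) :=
    (ofReal_integral_eq_lintegral_ofReal hInt hnn).symm
  have h6 : ∫ x in Ioi (R+1), x ^ (-p) = (R+1)^(1-p)/(p-1) := by
    rw [integral_Ioi_rpow_of_lt (by linarith) (by linarith)]
    have e : -p + 1 = 1 - p := by ring
    rw [e]
    have hp1 : p - 1 ≠ 0 := by linarith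
    have hp2 : 1 - p ≠ 0 := by linarith
    field_simp
    ring
  rw [h1, h3, h4, h5, h6]

lemma int_Iic_eq {p : ℝ} (R : ℝ) :
    ∫⁻ x in Iic (-R), ENNReal.ofReal ((|x|+1)^(-p))
      = ∫⁻ x in Ici R, ENNReal.ofReal ((|x|+1)^(-p)) := by
  have h2 : (fun x : ℝ => -x) ⁻¹' (Ici R) = Iic (-R) := by
    ext x; simp only [Set.mem_preimage, Set.mem_Ici, Set.mem_Iic]
    constructor <;> intro <;> linarith
  rw [← h2]
  exact int_neg_set _ (by fun_prop) (fun x => by rw [abs_neg]) _ measurableSet_Ici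

lemma int_abs_tail {p : ℝ} (hp : 1 < p) {R : ℝ} (hR : 0 ≤ R) :
    ∫⁻ x in {x : ℝ | R ≤ |x|}, ENNReal.ofReal ((|x|+1)^(-p))
      ≤ ENNReal.ofReal (2 * ((R+1)^(1-p)/(p-1))) := by
  have hsub : {x : ℝ | R ≤ |x|} ⊆ Iic (-R) ∪ Ici R := by
    intro x hx
    simp only [Set.mem_setOf_eq] at hx
    rcases le_total 0 x with h | h
    · exact Or.inr (by simp only [Set.mem_Ici]; rwa [abs_of_nonneg h] at hx)
    · exact Or.inl (by simp only [Set.mem_Iic]; rw [abs_of_nonpos h] at hx; linarith)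
  calc ∫⁻ x in {x : ℝ | R ≤ |x|}, ENNReal.ofReal ((|x|+1)^(-p))
      ≤ ∫⁻ x in Iic (-R) ∪ Ici R, ENNReal.ofReal ((|x|+1)^(-p)) :=
        lintegral_mono_set hsub
    _ ≤ (∫⁻ x in Iic (-R), ENNReal.ofReal ((|x|+1)^(-p)))
        + ∫⁻ x in Ici R, ENNReal.ofReal ((|x|+1)^(-p)) := lintegral_union_le _ _ _
    _ = ENNReal.ofReal ((R+1)^(1-p)/(p-1)) + ENNReal.ofReal ((R+1)^(1-p)/(p-1)) := by
        rw [int_Iic_eq, int_Ici hp hR]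
    _ = ENNReal.ofReal (2 * ((R+1)^(1-p)/(p-1))) := by
        have hpos : 0 ≤ (R+1)^(1-p)/(p-1) :=
          div_nonneg (rpow_nonneg (by linarith) _) (by linarith)
        rw [← ENNReal.ofReal_add hpos hpos]
        ring_nf

lemma int_all {p : ℝ} (hp : 1 < p) :
    ∫⁻ x : ℝ, ENNReal.ofReal ((|x|+1)^(-p)) ≠ ⊤ := by
  have h : {x : ℝ | (0:ℝ) ≤ |x|} = Set.univ := by
    ext x; simp [abs_nonneg]
  have := int_abs_tail hp (le_refl (0:ℝ))
  rw [h, setLIntegral_univ] at this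
  exact ne_top_of_le_ne_top ENNReal.ofReal_ne_top this

lemma int_Icc0 {q : ℝ} (hq : q < 1) {R : ℝ} (hR : 0 ≤ R) :
    ∫⁻ x in Icc 0 R, ENNReal.ofReal ((|x|+1)^(-q))
      ≤ ENNReal.ofReal ((R+1)^(1-q)/(1-q)) := by
  have h1 : ∫⁻ x in Icc 0 R, ENNReal.ofReal ((|x|+1)^(-q))
      = ∫⁻ x in Icc 0 R, ENNReal.ofReal ((x+1)^(-q)) :=
    setLIntegral_congr_fun measurableSet_Icc (fun x hx => by
      simp only [abs_of_nonneg hx.1])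
  have h2 : (fun x : ℝ => x + 1) ⁻¹' (Icc 1 (R+1)) = Icc 0 R := by
    ext x; simp only [Set.mem_preimage, Set.mem_Icc]
    constructor <;> intro h <;> constructor <;> linarith [h.1, h.2]
  have h3 : ∫⁻ x in Icc 0 R, ENNReal.ofReal ((x+1)^(-q))
      = ∫⁻ x in Icc 1 (R+1), ENNReal.ofReal (x^(-q)) := by
    rw [← h2, lint_shift (fun x => ENNReal.ofReal (x^(-q))) _ measurableSet_Icc]
  have h4 : ∫⁻ x in Icc 1 (R+1), ENNReal.ofReal (x^(-q))
      = ∫⁻ x in Ioc 1 (R+1), ENNReal.ofReal (x^(-q)) :=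
    (setLIntegral_congr (Ioc_ae_eq_Icc (a := 1) (b := R+1))).symm
  have hInt : IntegrableOn (fun x : ℝ => x ^ (-q)) (Ioc 1 (R+1)) := by
    rw [← intervalIntegrable_iff_integrableOn_Ioc_of_le (by linarith : (1:ℝ) ≤ R+1)]
    exact intervalIntegral.intervalIntegrable_rpow (Or.inr (by
      intro hmem
      rcases hmem with ⟨hl, hr⟩
      simp only [inf_le_iff] at hl
      rcases hl with h | h <;> linarith))
  have hnn : 0 ≤ᵐ[volume.restrict (Ioc 1 (R+1))] fun x : ℝ => x ^ (-q) := by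
    filter_upwards [ae_restrict_mem measurableSet_Ioc] with x hx
    exact rpow_nonneg (by linarith [hx.1]) _
  have h5 : ∫⁻ x in Ioc 1 (R+1), ENNReal.ofReal (x^(-q))
      = ENNReal.ofReal (∫ x in Ioc 1 (R+1), x ^ (-q)) :=
    (ofReal_integral_eq_lintegral_ofReal hInt hnn).symm
  have h6 : ∫ x in Ioc 1 (R+1), x ^ (-q) = ((R+1)^(1-q) - 1)/(1-q) := by
    rw [← intervalIntegral.integral_of_le (by linarith : (1:ℝ) ≤ R+1)]
    rw [integral_rpow (Or.inr ⟨by intro h; exact (ne_of_lt hq) (by linarith),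
      by intro hmem; rcases hmem with ⟨hl, hr⟩; simp only [inf_le_iff] at hl
         rcases hl with h | h <;> linarith⟩)]
    rw [Real.one_rpow]
    have e : -q + 1 = 1 - q := by ring
    rw [e]
  rw [h1, h3, h4, h5, h6]
  apply ENNReal.ofReal_le_ofReal
  gcongr
  · linarith

lemma int_abs_ball {q : ℝ} (hq : q < 1) {R : ℝ} (hR : 0 ≤ R) :
    ∫⁻ x in {x : ℝ | |x| ≤ R}, ENNReal.ofReal ((|x|+1)^(-q))
      ≤ ENNReal.ofReal (2 * ((R+1)^(1-q)/(1-q))) := by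
  have hsub : {x : ℝ | |x| ≤ R} ⊆ Icc (-R) 0 ∪ Icc 0 R := by
    intro x hx
    simp only [Set.mem_setOf_eq] at hx
    rcases le_total 0 x with h | h
    · exact Or.inr ⟨h, by rwa [abs_of_nonneg h] at hx⟩
    · refine Or.inl ⟨?_, h⟩
      rw [abs_of_nonpos h] at hx; linarith
  have hneg : ∫⁻ x in Icc (-R) 0, ENNReal.ofReal ((|x|+1)^(-q))
      = ∫⁻ x in Icc 0 R, ENNReal.ofReal ((|x|+1)^(-q)) := by
    have h2 : (fun x : ℝ => -x) ⁻¹' (Icc 0 R) = Icc (-R) 0 := by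
      ext x; simp only [Set.mem_preimage, Set.mem_Icc]
      constructor <;> intro h <;> constructor <;> linarith [h.1, h.2]
    rw [← h2]
    exact int_neg_set _ (by fun_prop) (fun x => by rw [abs_neg]) _ measurableSet_Icc
  have hpos : 0 ≤ (R+1)^(1-q)/(1-q) :=
    div_nonneg (rpow_nonneg (by linarith) _) (by linarith)
  calc ∫⁻ x in {x : ℝ | |x| ≤ R}, ENNReal.ofReal ((|x|+1)^(-q))
      ≤ ∫⁻ x in Icc (-R) 0 ∪ Icc 0 R, ENNReal.ofReal ((|x|+1)^(-q)) :=
        lintegral_mono_set hsub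
    _ ≤ (∫⁻ x in Icc (-R) 0, ENNReal.ofReal ((|x|+1)^(-q)))
        + ∫⁻ x in Icc 0 R, ENNReal.ofReal ((|x|+1)^(-q)) := lintegral_union_le _ _ _
    _ ≤ ENNReal.ofReal ((R+1)^(1-q)/(1-q)) + ENNReal.ofReal ((R+1)^(1-q)/(1-q)) := by
        rw [hneg]
        exact add_le_add (int_Icc0 hq hR) (int_Icc0 hq hR)
    _ = ENNReal.ofReal (2 * ((R+1)^(1-q)/(1-q))) := by
        rw [← ENNReal.ofReal_add hpos hpos]; ring_nf


lemma lint_top {f : ℝ → ℝ} {μ : Measure ℝ} (hm : AEStronglyMeasurable f μ)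
    (h0 : 0 ≤ᵐ[μ] f) (h : ¬ Integrable f μ) : ∫⁻ x, ENNReal.ofReal (f x) ∂μ = ⊤ := by
  by_contra h'
  exact h ⟨hm, (hasFiniteIntegral_iff_ofReal h0).2 (lt_top_iff_ne_top.2 h')⟩

lemma int_div {q : ℝ} (hq : q ≤ 1) {r : ℝ} (hr : 0 ≤ r) :
    ∫⁻ x in Ici r, ENNReal.ofReal ((x+1)^(-q)) = ⊤ := by
  have hm1 : (1:ℝ) ≤ max r 1 := le_max_right _ _
  have hmr : r ≤ max r 1 := le_max_left _ _
  have hmeas : Measurable fun x : ℝ => x ^ (-1:ℝ) := by fun_prop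
  have htop : ∫⁻ x in Ici (max r 1), ENNReal.ofReal (x ^ (-1:ℝ)) = ⊤ := by
    apply lint_top (hmeas.aestronglyMeasurable)
    · filter_upwards [ae_restrict_mem measurableSet_Ici] with x hx
      exact rpow_nonneg (by simp only [Set.mem_Ici] at hx; linarith) _
    · intro hInt
      have hIO : IntegrableOn (fun x : ℝ => x ^ (-1:ℝ)) (Ici (max r 1)) := hInt
      have h2 : IntegrableOn (fun x : ℝ => x ^ (-1:ℝ)) (Ioi (max r 1)) :=
        hIO.mono_set Ioi_subset_Ici_self
      rw [integrableOn_Ioi_rpow_iff (by linarith)] at h2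
      linarith
  have hbig : ∫⁻ x in Ici (max r 1), ENNReal.ofReal (2⁻¹ * x ^ (-1:ℝ)) = ⊤ := by
    have : ∀ x : ℝ, ENNReal.ofReal (2⁻¹ * x ^ (-1:ℝ))
        = ENNReal.ofReal 2⁻¹ * ENNReal.ofReal (x ^ (-1:ℝ)) := fun x =>
      ENNReal.ofReal_mul (by norm_num)
    simp_rw [this]
    rw [lintegral_const_mul' _ _ ENNReal.ofReal_ne_top, htop, ENNReal.mul_top (by simp)]
  rw [eq_top_iff, ← hbig]
  calc ∫⁻ x in Ici (max r 1), ENNReal.ofReal (2⁻¹ * x ^ (-1:ℝ))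
      ≤ ∫⁻ x in Ici (max r 1), ENNReal.ofReal ((x+1)^(-q)) := by
        apply setLIntegral_mono (by fun_prop)
        intro x hx
        simp only [Set.mem_Ici] at hx
        have hx1 : (1:ℝ) ≤ x := le_trans hm1 hx
        apply ENNReal.ofReal_le_ofReal
        calc 2⁻¹ * x^(-1:ℝ) = (2*x)⁻¹ := by rw [Real.rpow_neg_one, ← mul_inv]
          _ ≤ (x+1)⁻¹ := by apply inv_anti₀ <;> linarith
          _ = (x+1)^(-1:ℝ) := (Real.rpow_neg_one _).symm
          _ ≤ (x+1)^(-q) := rpow_le_rpow_of_exponent_le (by linarith) (by linarith)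
    _ ≤ ∫⁻ x in Ici r, ENNReal.ofReal ((x+1)^(-q)) :=
        lintegral_mono_set (Ici_subset_Ici.2 hmr)

lemma int_div' {q K r : ℝ} (hq : q ≤ 1) (hK : 0 < K) (hr : 0 ≤ r) :
    ∫⁻ x in Ici r, ENNReal.ofReal (K * (x+1)^(-q)) = ⊤ := by
  have : ∀ x : ℝ, ENNReal.ofReal (K * (x+1)^(-q))
      = ENNReal.ofReal K * ENNReal.ofReal ((x+1)^(-q)) := fun x =>
    ENNReal.ofReal_mul hK.le
  simp_rw [this]
  rw [lintegral_const_mul' _ _ ENNReal.ofReal_ne_top, int_div hq hr,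
    ENNReal.mul_top (by simp [hK])]

lemma measSet_tail (y : ℝ) : MeasurableSet {v : ℝ | |y| ≤ |v|} :=
  measurableSet_le measurable_const (by fun_prop)

lemma measSet_ball (y : ℝ) : MeasurableSet {u : ℝ | |u| ≤ |y|} :=
  measurableSet_le (by fun_prop) measurable_const

lemma Gkey {K p q : ℝ} (hK : 0 ≤ K) (hq : 1 < q) (hs : 2 < p + q) :
    ∫⁻ y : ℝ, ∫⁻ v in {v : ℝ | |y| ≤ |v|},
      ENNReal.ofReal (K * ((|y|+1)^(-p) * (|v|+1)^(-q))) ≠ ⊤ := by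
  have hexp : ∀ y : ℝ, (|y|+1)^(-p) * (|y|+1)^(1-q) = (|y|+1)^(-(p+q-1)) := fun y => by
    rw [← Real.rpow_add (base_pos y)]; ring_nf
  have hC : 0 ≤ 2*K/(q-1) := div_nonneg (by linarith) (by linarith)
  have hinner : ∀ y : ℝ, (∫⁻ v in {v : ℝ | |y| ≤ |v|},
      ENNReal.ofReal (K * ((|y|+1)^(-p) * (|v|+1)^(-q))))
      ≤ ENNReal.ofReal ((2*K/(q-1)) * (|y|+1)^(-(p+q-1))) := by
    intro y
    have hKA : 0 ≤ K * (|y|+1)^(-p) := mul_nonneg hK (rpow_nonneg (by positivity) _)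
    calc ∫⁻ v in {v : ℝ | |y| ≤ |v|}, ENNReal.ofReal (K * ((|y|+1)^(-p) * (|v|+1)^(-q)))
        = ∫⁻ v in {v : ℝ | |y| ≤ |v|},
            ENNReal.ofReal (K * (|y|+1)^(-p)) * ENNReal.ofReal ((|v|+1)^(-q)) := by
          apply setLIntegral_congr_fun (measSet_tail y)
          refine fun v _ => ?_
          dsimp only
          rw [← ENNReal.ofReal_mul hKA, mul_assoc]
      _ = ENNReal.ofReal (K * (|y|+1)^(-p)) * ∫⁻ v in {v : ℝ | |y| ≤ |v|},
            ENNReal.ofReal ((|v|+1)^(-q)) :=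
          lintegral_const_mul' _ _ ENNReal.ofReal_ne_top
      _ ≤ ENNReal.ofReal (K * (|y|+1)^(-p))
            * ENNReal.ofReal (2 * ((|y|+1)^(1-q)/(q-1))) :=
          mul_le_mul_right (int_abs_tail hq (abs_nonneg y)) _
      _ = ENNReal.ofReal ((2*K/(q-1)) * (|y|+1)^(-(p+q-1))) := by
          rw [← ENNReal.ofReal_mul hKA, ← hexp y]
          congr 1
          have hq1 : q - 1 ≠ 0 := by intro h; linarith
          field_simp
  apply ne_top_of_le_ne_top ?_ (lintegral_mono hinner)
  have hmul : ∀ y : ℝ, ENNReal.ofReal ((2*K/(q-1)) * (|y|+1)^(-(p+q-1)))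
      = ENNReal.ofReal (2*K/(q-1)) * ENNReal.ofReal ((|y|+1)^(-(p+q-1))) := fun y =>
    ENNReal.ofReal_mul hC
  simp_rw [hmul]
  rw [lintegral_const_mul' _ _ ENNReal.ofReal_ne_top]
  exact ENNReal.mul_ne_top ENNReal.ofReal_ne_top (int_all (by linarith))

lemma Gkey2 {K p q : ℝ} (hK : 0 ≤ K) (hq : q < 1) (hs : 2 < p + q) :
    ∫⁻ y : ℝ, ∫⁻ u in {u : ℝ | |u| ≤ |y|},
      ENNReal.ofReal (K * ((|y|+1)^(-p) * (|u|+1)^(-q))) ≠ ⊤ := by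
  have hexp : ∀ y : ℝ, (|y|+1)^(-p) * (|y|+1)^(1-q) = (|y|+1)^(-(p+q-1)) := fun y => by
    rw [← Real.rpow_add (base_pos y)]; ring_nf
  have hC : 0 ≤ 2*K/(1-q) := div_nonneg (by linarith) (by linarith)
  have hinner : ∀ y : ℝ, (∫⁻ u in {u : ℝ | |u| ≤ |y|},
      ENNReal.ofReal (K * ((|y|+1)^(-p) * (|u|+1)^(-q))))
      ≤ ENNReal.ofReal ((2*K/(1-q)) * (|y|+1)^(-(p+q-1))) := by
    intro y
    have hKA : 0 ≤ K * (|y|+1)^(-p) := mul_nonneg hK (rpow_nonneg (by positivity) _)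
    calc ∫⁻ u in {u : ℝ | |u| ≤ |y|}, ENNReal.ofReal (K * ((|y|+1)^(-p) * (|u|+1)^(-q)))
        = ∫⁻ u in {u : ℝ | |u| ≤ |y|},
            ENNReal.ofReal (K * (|y|+1)^(-p)) * ENNReal.ofReal ((|u|+1)^(-q)) := by
          apply setLIntegral_congr_fun (measSet_ball y)
          refine fun v _ => ?_
          dsimp only
          rw [← ENNReal.ofReal_mul hKA, mul_assoc]
      _ = ENNReal.ofReal (K * (|y|+1)^(-p)) * ∫⁻ u in {u : ℝ | |u| ≤ |y|},
            ENNReal.ofReal ((|u|+1)^(-q)) :=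
          lintegral_const_mul' _ _ ENNReal.ofReal_ne_top
      _ ≤ ENNReal.ofReal (K * (|y|+1)^(-p))
            * ENNReal.ofReal (2 * ((|y|+1)^(1-q)/(1-q))) :=
          mul_le_mul_right (int_abs_ball hq (abs_nonneg y)) _
      _ = ENNReal.ofReal ((2*K/(1-q)) * (|y|+1)^(-(p+q-1))) := by
          rw [← ENNReal.ofReal_mul hKA, ← hexp y]
          congr 1
          have hq1 : 1 - q ≠ 0 := by intro h; linarith
          field_simp
  apply ne_top_of_le_ne_top ?_ (lintegral_mono hinner)
  have hmul : ∀ y : ℝ, ENNReal.ofReal ((2*K/(1-q)) * (|y|+1)^(-(p+q-1)))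
      = ENNReal.ofReal (2*K/(1-q)) * ENNReal.ofReal ((|y|+1)^(-(p+q-1))) := fun y =>
    ENNReal.ofReal_mul hC
  simp_rw [hmul]
  rw [lintegral_const_mul' _ _ ENNReal.ofReal_ne_top]
  exact ENNReal.mul_ne_top ENNReal.ofReal_ne_top (int_all (by linarith))

lemma comp_bound' (c : ℝ) {s t : ℝ} (hs : 0 ≤ s) (ht : 0 ≤ t) (h1 : s ≤ 4*t) (h2 : t ≤ 4*s) :
    4 ^ (-|c|) * (t+1) ^ (-c) ≤ (s+1) ^ (-c) := by
  have h := comp_bound c ht hs h2 h1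
  have h4 : (0:ℝ) < 4 ^ |c| := rpow_pos_of_pos (by norm_num) _
  rw [Real.rpow_neg (by norm_num : (0:ℝ) ≤ 4), inv_mul_le_iff₀ h4]
  exact h

lemma outer_top {F : ℝ → ℝ → ℝ≥0∞} {s : Set ℝ} (hs : MeasurableSet s) (hμ : volume s ≠ 0)
    (h : ∀ y ∈ s, ∫⁻ v, F y v = ⊤) : ∫⁻ y, ∫⁻ v, F y v = ⊤ := by
  rw [eq_top_iff]
  have htop : (⊤:ℝ≥0∞) = ∫⁻ y, s.indicator (fun _ => (⊤:ℝ≥0∞)) y := by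
    rw [lintegral_indicator hs, setLIntegral_const, ENNReal.top_mul hμ]
  rw [htop]
  apply lintegral_mono
  intro y
  by_cases hy : y ∈ s
  · rw [Set.indicator_of_mem hy]; exact (h y hy).ge
  · rw [Set.indicator_of_notMem hy]; exact zero_le

lemma inner_div {f : ℝ → ℝ≥0∞} {K q r : ℝ} (hq : q ≤ 1) (hK : 0 < K) (hr : 0 ≤ r)
    (hp : ∀ v ∈ Ici r, ENNReal.ofReal (K * (v+1)^(-q)) ≤ f v) : ∫⁻ v, f v = ⊤ := by
  rw [eq_top_iff, ← int_div' hq hK hr, ← lintegral_indicator measurableSet_Ici]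
  apply lintegral_mono
  intro v
  by_cases hv : v ∈ Ici r
  · rw [Set.indicator_of_mem hv]; exact hp v hv
  · rw [Set.indicator_of_notMem hv]; exact zero_le

lemma const_on_Icc {α β : ℝ} (hαβ : α ≤ β) {z : ℝ≥0∞} {f : ℝ → ℝ≥0∞}
    (hp : ∀ v ∈ Icc α β, z ≤ f v) : z * ENNReal.ofReal (β - α) ≤ ∫⁻ v, f v := by
  have h1 : z * ENNReal.ofReal (β - α) = ∫⁻ v, (Icc α β).indicator (fun _ => z) v := by
    rw [lintegral_indicator measurableSet_Icc, setLIntegral_const, Real.volume_Icc]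
  rw [h1]
  apply lintegral_mono
  intro v
  by_cases hv : v ∈ Icc α β
  · rw [Set.indicator_of_mem hv]; exact hp v hv
  · rw [Set.indicator_of_notMem hv]; exact zero_le

lemma div_case1 {a b c : ℝ} (hbc : b + c ≤ 1) :
    ∫⁻ y : ℝ, ∫⁻ v : ℝ,
      ENNReal.ofReal ((|y| + 1) ^ (-a) * (|v| + 1) ^ (-b) * (|y + v| + 1) ^ (-c)) = ⊤ := by
  apply outer_top (s := Icc (0:ℝ) 1) measurableSet_Icc (by simp [Real.volume_Icc])
  intro y hy
  simp only [Set.mem_Icc] at hy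
  apply inner_div (K := 2^(-|a|) * 4^(-|c|)) hbc (by positivity) zero_le_one
  intro v hv
  simp only [Set.mem_Ici] at hv
  apply ENNReal.ofReal_le_ofReal
  have hy0 : 0 ≤ y := hy.1
  have hyv : (0:ℝ) ≤ y + v := by linarith
  rw [abs_of_nonneg hy0, abs_of_nonneg (by linarith : (0:ℝ) ≤ v), abs_of_nonneg hyv]
  have hsplit : (v+1:ℝ)^(-(b+c)) = (v+1)^(-b) * (v+1)^(-c) := by
    rw [← Real.rpow_add (by linarith)]; ring_nf
  have h1 : (2:ℝ)^(-|a|) ≤ (y+1)^(-a) := small_bound a (by linarith) (by linarith)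
  have h3 : (4:ℝ)^(-|c|) * (v+1)^(-c) ≤ (y+v+1)^(-c) :=
    comp_bound' c hyv (by linarith) (by linarith) (by linarith)
  calc 2^(-|a|) * 4^(-|c|) * (v+1)^(-(b+c))
      = (2:ℝ)^(-|a|) * (v+1)^(-b) * (4^(-|c|) * (v+1)^(-c)) := by rw [hsplit]; ring
    _ ≤ (y+1)^(-a) * (v+1)^(-b) * ((y+v+1)^(-c)) :=
        mul_le_mul (mul_le_mul h1 le_rfl (by positivity) (by positivity)) h3
          (by positivity) (by positivity)

lemma div_case2 {a b c : ℝ} (hac : a + c ≤ 1) :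
    ∫⁻ y : ℝ, ∫⁻ v : ℝ,
      ENNReal.ofReal ((|y| + 1) ^ (-a) * (|v| + 1) ^ (-b) * (|y + v| + 1) ^ (-c)) = ⊤ := by
  apply inner_div (K := 2^(-|b|) * 4^(-|c|)) hac (by positivity) zero_le_one
  intro y hy
  simp only [Set.mem_Ici] at hy
  have hle : ENNReal.ofReal (2^(-|b|) * 4^(-|c|) * (y+1)^(-(a+c))) * ENNReal.ofReal ((1:ℝ) - 0)
      ≤ ∫⁻ v : ℝ, ENNReal.ofReal ((|y| + 1) ^ (-a) * (|v| + 1) ^ (-b) * (|y + v| + 1) ^ (-c)) := by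
    apply const_on_Icc (by norm_num : (0:ℝ) ≤ 1)
    intro v hv
    apply ENNReal.ofReal_le_ofReal
    have hv0 : 0 ≤ v := hv.1
    have hv1 : v ≤ 1 := hv.2
    have hyv : (0:ℝ) ≤ y + v := by linarith
    rw [abs_of_nonneg (by linarith : (0:ℝ) ≤ y), abs_of_nonneg hv0, abs_of_nonneg hyv]
    have hsplit : (y+1:ℝ)^(-(a+c)) = (y+1)^(-a) * (y+1)^(-c) := by
      rw [← Real.rpow_add (by linarith)]; ring_nf
    have h2 : (2:ℝ)^(-|b|) ≤ (v+1)^(-b) := small_bound b (by linarith) (by linarith)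
    have h3 : (4:ℝ)^(-|c|) * (y+1)^(-c) ≤ (y+v+1)^(-c) :=
      comp_bound' c hyv (by linarith) (by linarith) (by linarith)
    calc 2^(-|b|) * 4^(-|c|) * (y+1)^(-(a+c))
        = (y+1)^(-a) * (2:ℝ)^(-|b|) * (4^(-|c|) * (y+1)^(-c)) := by rw [hsplit]; ring
      _ ≤ (y+1)^(-a) * (v+1)^(-b) * ((y+v+1)^(-c)) :=
          mul_le_mul (mul_le_mul le_rfl h2 (by positivity) (by positivity)) h3
            (by positivity) (by positivity)
  calc ENNReal.ofReal (2^(-|b|) * 4^(-|c|) * (y+1)^(-(a+c)))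
      = ENNReal.ofReal (2^(-|b|) * 4^(-|c|) * (y+1)^(-(a+c))) * ENNReal.ofReal ((1:ℝ) - 0) := by
        norm_num
    _ ≤ _ := hle

lemma div_case3 {a b c : ℝ} (hab : a + b ≤ 1) :
    ∫⁻ y : ℝ, ∫⁻ v : ℝ,
      ENNReal.ofReal ((|y| + 1) ^ (-a) * (|v| + 1) ^ (-b) * (|y + v| + 1) ^ (-c)) = ⊤ := by
  have hshift : ∀ y : ℝ, (∫⁻ v : ℝ,
      ENNReal.ofReal ((|y| + 1) ^ (-a) * (|v| + 1) ^ (-b) * (|y + v| + 1) ^ (-c)))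
      = ∫⁻ u : ℝ,
      ENNReal.ofReal ((|y| + 1) ^ (-a) * (|u - y| + 1) ^ (-b) * (|u| + 1) ^ (-c)) := by
    intro y
    rw [← lintegral_add_right_eq_self (fun v : ℝ =>
      ENNReal.ofReal ((|y| + 1) ^ (-a) * (|v| + 1) ^ (-b) * (|y + v| + 1) ^ (-c))) (-y)]
    congr 1
    funext u
    have h1 : u + -y = u - y := by ring
    have h2 : y + (u + -y) = u := by ring
    have h3 : y + (u - y) = u := by ring
    simp only [h1, h2, h3]
  rw [lintegral_congr hshift]
  apply inner_div (K := 4^(-|b|) * 2^(-|c|)) hab (by positivity) (by norm_num : (0:ℝ) ≤ 2)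
  intro y hy
  simp only [Set.mem_Ici] at hy
  have hle : ENNReal.ofReal (4^(-|b|) * 2^(-|c|) * (y+1)^(-(a+b))) * ENNReal.ofReal ((1:ℝ) - 0)
      ≤ ∫⁻ u : ℝ,
        ENNReal.ofReal ((|y| + 1) ^ (-a) * (|u - y| + 1) ^ (-b) * (|u| + 1) ^ (-c)) := by
    apply const_on_Icc (by norm_num : (0:ℝ) ≤ 1)
    intro u hu
    apply ENNReal.ofReal_le_ofReal
    have hu0 : 0 ≤ u := hu.1
    have hu1 : u ≤ 1 := hu.2
    rw [abs_of_nonneg (by linarith : (0:ℝ) ≤ y), abs_of_nonneg hu0,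
      abs_of_nonpos (by linarith : u - y ≤ 0)]
    have hsplit : (y+1:ℝ)^(-(a+b)) = (y+1)^(-a) * (y+1)^(-b) := by
      rw [← Real.rpow_add (by linarith)]; ring_nf
    have h2 : (4:ℝ)^(-|b|) * (y+1)^(-b) ≤ (-(u-y)+1)^(-b) := by
      have := comp_bound' b (s := y - u) (by linarith) (by linarith : (0:ℝ) ≤ y)
        (by linarith) (by linarith)
      have he : -(u-y) = y - u := by ring
      rw [he]
      exact this
    have h3 : (2:ℝ)^(-|c|) ≤ (u+1)^(-c) := small_bound c (by linarith) (by linarith)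
    calc 4^(-|b|) * 2^(-|c|) * (y+1)^(-(a+b))
        = (y+1)^(-a) * (4^(-|b|) * (y+1)^(-b)) * (2:ℝ)^(-|c|) := by rw [hsplit]; ring
      _ ≤ (y+1)^(-a) * ((-(u-y)+1)^(-b)) * ((u+1)^(-c)) :=
          mul_le_mul (mul_le_mul le_rfl h2 (by positivity) (by positivity)) h3
            (by positivity)
            (mul_nonneg (by positivity) (rpow_nonneg (by linarith) _))
  calc ENNReal.ofReal (4^(-|b|) * 2^(-|c|) * (y+1)^(-(a+b)))
      = ENNReal.ofReal (4^(-|b|) * 2^(-|c|) * (y+1)^(-(a+b))) * ENNReal.ofReal ((1:ℝ) - 0) := by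
        norm_num
    _ ≤ _ := hle

lemma div_case4 {a b c : ℝ} (habc : a + b + c ≤ 2) :
    ∫⁻ y : ℝ, ∫⁻ v : ℝ,
      ENNReal.ofReal ((|y| + 1) ^ (-a) * (|v| + 1) ^ (-b) * (|y + v| + 1) ^ (-c)) = ⊤ := by
  apply inner_div (K := 4^(-|b|) * 4^(-|c|) / 2) (by linarith : a+b+c-1 ≤ 1)
    (by positivity) zero_le_one
  intro y hy
  simp only [Set.mem_Ici] at hy
  have hy0 : (0:ℝ) < y := by linarith
  have hle : ENNReal.ofReal (4^(-|b|) * 4^(-|c|) * (y+1)^(-(a+b+c))) * ENNReal.ofReal (2*y - y)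
      ≤ ∫⁻ v : ℝ, ENNReal.ofReal ((|y| + 1) ^ (-a) * (|v| + 1) ^ (-b) * (|y + v| + 1) ^ (-c)) := by
    apply const_on_Icc (by linarith : y ≤ 2*y)
    intro v hv
    apply ENNReal.ofReal_le_ofReal
    have hv0 : y ≤ v := hv.1
    have hv1 : v ≤ 2*y := hv.2
    have hyv : (0:ℝ) ≤ y + v := by linarith
    rw [abs_of_nonneg (by linarith : (0:ℝ) ≤ y), abs_of_nonneg (by linarith : (0:ℝ) ≤ v),
      abs_of_nonneg hyv]
    have hsplit : (y+1:ℝ)^(-(a+b+c)) = (y+1)^(-a) * ((y+1)^(-b) * (y+1)^(-c)) := by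
      rw [← Real.rpow_add (by linarith), ← Real.rpow_add (by linarith)]; ring_nf
    have h2 : (4:ℝ)^(-|b|) * (y+1)^(-b) ≤ (v+1)^(-b) :=
      comp_bound' b (by linarith) (by linarith) (by linarith) (by linarith)
    have h3 : (4:ℝ)^(-|c|) * (y+1)^(-c) ≤ (y+v+1)^(-c) :=
      comp_bound' c hyv (by linarith) (by linarith) (by linarith)
    calc 4^(-|b|) * 4^(-|c|) * (y+1)^(-(a+b+c))
        = (y+1)^(-a) * (4^(-|b|) * (y+1)^(-b)) * (4^(-|c|) * (y+1)^(-c)) := by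
          rw [hsplit]; ring
      _ ≤ (y+1)^(-a) * (v+1)^(-b) * ((y+v+1)^(-c)) :=
          mul_le_mul (mul_le_mul le_rfl h2 (by positivity) (by positivity)) h3
            (by positivity)
            (mul_nonneg (by positivity) (rpow_nonneg (by linarith) _))
  refine le_trans ?_ hle
  rw [← ENNReal.ofReal_mul (by positivity)]
  apply ENNReal.ofReal_le_ofReal
  have hexp : (y+1:ℝ)^(-(a+b+c-1)) = (y+1)^(-(a+b+c)) * (y+1) := by
    rw [← Real.rpow_add_one (by positivity : (y:ℝ)+1 ≠ 0)]
    ring_nf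
  rw [hexp]
  have h2y : (y:ℝ)+1 ≤ 2*(2*y - y) := by linarith
  have hnn : (0:ℝ) ≤ (y+1)^(-(a+b+c)) := by positivity
  calc 4^(-|b|) * 4^(-|c|) / 2 * ((y+1)^(-(a+b+c)) * (y+1))
      = 4^(-|b|) * 4^(-|c|) * (y+1)^(-(a+b+c)) * ((y+1)/2) := by ring
    _ ≤ 4^(-|b|) * 4^(-|c|) * (y+1)^(-(a+b+c)) * (2*y - y) := by
        apply mul_le_mul le_rfl (by linarith) (by linarith) (by positivity)

lemma suff {a b c : ℝ} (hab : 1 < a + b) (hac : 1 < a + c) (hbc : 1 < b + c)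
    (habc : 2 < a + b + c) :
    ∫⁻ y : ℝ, ∫⁻ v : ℝ,
      ENNReal.ofReal ((|y| + 1) ^ (-a) * (|v| + 1) ^ (-b) * (|y + v| + 1) ^ (-c)) ≠ ⊤ := by
  set c' := min c ((3 - a - b)/2) with hc'def
  have hc'le : c' ≤ c := min_le_left _ _
  have hc'lt : c' < 1 := lt_of_le_of_lt (min_le_right _ _) (by linarith)
  have habc' : 2 < a + b + c' := by
    rcases le_total c ((3-a-b)/2) with h | h
    · rw [hc'def, min_eq_left h]; exact habc
    · rw [hc'def, min_eq_right h]; linarith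
  -- dominating functions
  set G1 : ℝ × ℝ → ℝ≥0∞ := fun p =>
    {q : ℝ × ℝ | |q.1| ≤ |q.2|}.indicator
      (fun q => ENNReal.ofReal (4^|c| * ((|q.1|+1)^(-a) * (|q.2|+1)^(-(b+c))))) p with hG1def
  set G2 : ℝ × ℝ → ℝ≥0∞ := fun p =>
    {q : ℝ × ℝ | |q.2| ≤ |q.1|}.indicator
      (fun q => ENNReal.ofReal (4^|c| * ((|q.2|+1)^(-b) * (|q.1|+1)^(-(a+c))))) p with hG2def
  set H3 : ℝ × ℝ → ℝ≥0∞ := fun p =>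
    {q : ℝ × ℝ | |q.2| ≤ |q.1|}.indicator
      (fun q => ENNReal.ofReal (4^|b| * ((|q.1|+1)^(-(a+b)) * (|q.2|+1)^(-c')))) p with hH3def
  set G3 : ℝ × ℝ → ℝ≥0∞ := fun p => H3 (p.1, p.1 + p.2) with hG3def
  have hS1 : MeasurableSet {q : ℝ × ℝ | |q.1| ≤ |q.2|} :=
    measurableSet_le (by fun_prop) (by fun_prop)
  have hS2 : MeasurableSet {q : ℝ × ℝ | |q.2| ≤ |q.1|} :=
    measurableSet_le (by fun_prop) (by fun_prop)
  have mG1 : Measurable G1 := Measurable.indicator (by fun_prop) hS1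
  have mG2 : Measurable G2 := Measurable.indicator (by fun_prop) hS2
  have mH3 : Measurable H3 := Measurable.indicator (by fun_prop) hS2
  have mG3 : Measurable G3 := mH3.comp (by fun_prop)
  -- pointwise domination
  have hdom : ∀ y v : ℝ,
      ENNReal.ofReal ((|y| + 1) ^ (-a) * (|v| + 1) ^ (-b) * (|y + v| + 1) ^ (-c))
        ≤ G1 (y, v) + G2 (y, v) + G3 (y, v) := by
    intro y v
    have hyv_le : |y + v| ≤ |y| + |v| := abs_add_le y v
    have hv_le : |v| ≤ |y + v| + |y| := by
      calc |v| = |(y + v) + (-y)| := by ring_nf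
        _ ≤ |y + v| + |(-y)| := abs_add_le _ _
        _ = |y + v| + |y| := by rw [abs_neg]
    have hy_le : |y| ≤ |y + v| + |v| := by
      calc |y| = |(y + v) + (-v)| := by ring_nf
        _ ≤ |y + v| + |(-v)| := abs_add_le _ _
        _ = |y + v| + |v| := by rw [abs_neg]
    have hA : (0:ℝ) ≤ (|y|+1)^(-a) := rpow_nonneg (by positivity) _
    have hB : (0:ℝ) ≤ (|v|+1)^(-b) := rpow_nonneg (by positivity) _
    have hC : (0:ℝ) ≤ (|y+v|+1)^(-c) := rpow_nonneg (by positivity) _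
    rcases le_total |y| |v| with h1 | h1
    · rcases le_total |y| |y+v| with h2 | h2
      · -- E1 : |y| smallest
        refine le_trans ?_ (le_add_right (le_add_right le_rfl))
        have hmem : (y, v) ∈ {q : ℝ × ℝ | |q.1| ≤ |q.2|} := h1
        rw [hG1def]
        simp only [Set.indicator_of_mem hmem]
        apply ENNReal.ofReal_le_ofReal
        have hcb : (|y+v|+1)^(-c) ≤ 4^|c| * (|v|+1)^(-c) :=
          comp_bound c (abs_nonneg _) (abs_nonneg _) (by linarith) (by linarith)
        calc (|y|+1)^(-a) * (|v|+1)^(-b) * (|y+v|+1)^(-c)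
            ≤ (|y|+1)^(-a) * (|v|+1)^(-b) * (4^|c| * (|v|+1)^(-c)) :=
              mul_le_mul_of_nonneg_left hcb (by positivity)
          _ = 4^|c| * ((|y|+1)^(-a) * ((|v|+1)^(-b) * (|v|+1)^(-c))) := by ring
          _ = 4^|c| * ((|y|+1)^(-a) * (|v|+1)^(-(b+c))) := by
              rw [← Real.rpow_add (base_pos v)]; ring_nf
      · -- |y+v| ≤ |y| ≤ |v| : E3
        refine le_trans ?_ (le_add_left le_rfl)
        have hmem : ((y,v).1, (y,v).1 + (y,v).2) ∈ {q : ℝ × ℝ | |q.2| ≤ |q.1|} := h2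
        rw [hG3def, hH3def]
        simp only [Set.indicator_of_mem hmem]
        apply ENNReal.ofReal_le_ofReal
        have hbb : (|v|+1)^(-b) ≤ 4^|b| * (|y|+1)^(-b) :=
          comp_bound b (abs_nonneg _) (abs_nonneg _) (by linarith) (by linarith)
        have hcc : (|y+v|+1)^(-c) ≤ (|y+v|+1)^(-c') :=
          rpow_le_rpow_of_exponent_le (base_one _) (by linarith)
        calc (|y|+1)^(-a) * (|v|+1)^(-b) * (|y+v|+1)^(-c)
            ≤ (|y|+1)^(-a) * (4^|b| * (|y|+1)^(-b)) * (|y+v|+1)^(-c') := by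
              apply mul_le_mul (mul_le_mul le_rfl hbb hB hA) hcc hC
              positivity
          _ = 4^|b| * (((|y|+1)^(-a) * (|y|+1)^(-b)) * (|y+v|+1)^(-c')) := by ring
          _ = 4^|b| * ((|y|+1)^(-(a+b)) * (|y+v|+1)^(-c')) := by
              rw [← Real.rpow_add (base_pos y)]; ring_nf
    · rcases le_total |v| |y+v| with h2 | h2
      · -- E2 : |v| smallest
        refine le_trans ?_ (le_add_right (le_add_left le_rfl))
        have hmem : (y, v) ∈ {q : ℝ × ℝ | |q.2| ≤ |q.1|} := h1
        rw [hG2def]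
        simp only [Set.indicator_of_mem hmem]
        apply ENNReal.ofReal_le_ofReal
        have hcb : (|y+v|+1)^(-c) ≤ 4^|c| * (|y|+1)^(-c) :=
          comp_bound c (abs_nonneg _) (abs_nonneg _) (by linarith) (by linarith)
        calc (|y|+1)^(-a) * (|v|+1)^(-b) * (|y+v|+1)^(-c)
            ≤ (|y|+1)^(-a) * (|v|+1)^(-b) * (4^|c| * (|y|+1)^(-c)) :=
              mul_le_mul_of_nonneg_left hcb (by positivity)
          _ = 4^|c| * ((|v|+1)^(-b) * ((|y|+1)^(-a) * (|y|+1)^(-c))) := by ring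
          _ = 4^|c| * ((|v|+1)^(-b) * (|y|+1)^(-(a+c))) := by
              rw [← Real.rpow_add (base_pos y)]; ring_nf
      · -- |y+v| ≤ |v| ≤ |y| : E3
        refine le_trans ?_ (le_add_left le_rfl)
        have hmem : ((y,v).1, (y,v).1 + (y,v).2) ∈ {q : ℝ × ℝ | |q.2| ≤ |q.1|} := by
          simp only [Set.mem_setOf_eq]; exact le_trans h2 h1
        rw [hG3def, hH3def]
        simp only [Set.indicator_of_mem hmem]
        apply ENNReal.ofReal_le_ofReal
        have hbb : (|v|+1)^(-b) ≤ 4^|b| * (|y|+1)^(-b) :=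
          comp_bound b (abs_nonneg _) (abs_nonneg _) (by linarith) (by linarith)
        have hcc : (|y+v|+1)^(-c) ≤ (|y+v|+1)^(-c') :=
          rpow_le_rpow_of_exponent_le (base_one _) (by linarith)
        calc (|y|+1)^(-a) * (|v|+1)^(-b) * (|y+v|+1)^(-c)
            ≤ (|y|+1)^(-a) * (4^|b| * (|y|+1)^(-b)) * (|y+v|+1)^(-c') := by
              apply mul_le_mul (mul_le_mul le_rfl hbb hB hA) hcc hC
              positivity
          _ = 4^|b| * (((|y|+1)^(-a) * (|y|+1)^(-b)) * (|y+v|+1)^(-c')) := by ring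
          _ = 4^|b| * ((|y|+1)^(-(a+b)) * (|y+v|+1)^(-c')) := by
              rw [← Real.rpow_add (base_pos y)]; ring_nf
  -- the three pieces are finite
  have hT1 : ∫⁻ y : ℝ, ∫⁻ v : ℝ, G1 (y, v) ≠ ⊤ := by
    have heq : ∀ y : ℝ, (∫⁻ v : ℝ, G1 (y, v))
        = ∫⁻ v in {v : ℝ | |y| ≤ |v|},
            ENNReal.ofReal (4^|c| * ((|y|+1)^(-a) * (|v|+1)^(-(b+c)))) := by
      intro y
      rw [← lintegral_indicator (measSet_tail y)]
      congr 1
    rw [lintegral_congr heq]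
    exact Gkey (by positivity) hbc (by linarith)
  have hT2 : ∫⁻ y : ℝ, ∫⁻ v : ℝ, G2 (y, v) ≠ ⊤ := by
    rw [lintegral_lintegral_swap mG2.aemeasurable]
    have heq : ∀ v : ℝ, (∫⁻ y : ℝ, G2 (y, v))
        = ∫⁻ y in {y : ℝ | |v| ≤ |y|},
            ENNReal.ofReal (4^|c| * ((|v|+1)^(-b) * (|y|+1)^(-(a+c)))) := by
      intro v
      rw [← lintegral_indicator (measSet_tail v)]
      congr 1
    rw [lintegral_congr heq]
    exact Gkey (by positivity) hac (by linarith)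
  have hT3 : ∫⁻ y : ℝ, ∫⁻ v : ℝ, G3 (y, v) ≠ ⊤ := by
    have heq : ∀ y : ℝ, (∫⁻ v : ℝ, G3 (y, v))
        = ∫⁻ u in {u : ℝ | |u| ≤ |y|},
            ENNReal.ofReal (4^|b| * ((|y|+1)^(-(a+b)) * (|u|+1)^(-c'))) := by
      intro y
      have hshift : ∫⁻ v : ℝ, H3 (y, y + v) = ∫⁻ u : ℝ, H3 (y, u) :=
        lintegral_add_left_eq_self (fun u => H3 (y, u)) y
      rw [hG3def]
      simp only
      rw [hshift, ← lintegral_indicator (measSet_ball y)]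
      congr 1
    rw [lintegral_congr heq]
    exact Gkey2 (by positivity) hc'lt habc'
  -- combine
  have hsplit_inner : ∀ y : ℝ, (∫⁻ v : ℝ, (G1 (y, v) + G2 (y, v) + G3 (y, v)))
      = (∫⁻ v : ℝ, G1 (y, v)) + (∫⁻ v : ℝ, G2 (y, v)) + (∫⁻ v : ℝ, G3 (y, v)) := by
    intro y
    have m1 : Measurable fun v : ℝ => G1 (y, v) := mG1.comp measurable_prodMk_left
    have m2 : Measurable fun v : ℝ => G2 (y, v) := mG2.comp measurable_prodMk_left
    rw [lintegral_add_left (f := fun v => G1 (y, v) + G2 (y, v)) (m1.add m2), lintegral_add_left m1]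
  apply ne_top_of_le_ne_top ?_ (lintegral_mono fun y => lintegral_mono fun v => hdom y v)
  rw [lintegral_congr hsplit_inner]
  have M1 : Measurable fun y : ℝ => ∫⁻ v : ℝ, G1 (y, v) := mG1.lintegral_prod_right'
  have M2 : Measurable fun y : ℝ => ∫⁻ v : ℝ, G2 (y, v) := mG2.lintegral_prod_right'
  rw [lintegral_add_left (f := fun y => (∫⁻ v : ℝ, G1 (y, v)) + ∫⁻ v : ℝ, G2 (y, v)) (M1.add M2), lintegral_add_left M1]
  exact ENNReal.add_ne_top.2 ⟨ENNReal.add_ne_top.2 ⟨hT1, hT2⟩, hT3⟩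

end IntProdAbs

open IntProdAbs

theorem integrable_prod_abs_rpow_iff (a b c : ℝ) :
    Integrable (fun x : ℝ × ℝ =>
        (|x.1| + 1) ^ (-a) * (|x.2| + 1) ^ (-b) * (|x.1 + x.2| + 1) ^ (-c)) ↔
      (1 < a + b ∧ 1 < a + c ∧ 1 < b + c ∧ 2 < a + b + c) := by
  have hφcont : Continuous fun x : ℝ × ℝ =>
      (|x.1| + 1) ^ (-a) * (|x.2| + 1) ^ (-b) * (|x.1 + x.2| + 1) ^ (-c) := by
    refine Continuous.mul (Continuous.mul ?_ ?_) ?_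
    · exact (IntProdAbs.cont_pw a).comp (continuous_fst)
    · exact (IntProdAbs.cont_pw b).comp (continuous_snd)
    · exact (IntProdAbs.cont_pw c).comp (continuous_fst.add continuous_snd)
  have hφpos : ∀ z : ℝ × ℝ,
      0 ≤ (|z.1| + 1) ^ (-a) * (|z.2| + 1) ^ (-b) * (|z.1 + z.2| + 1) ^ (-c) := by
    intro z
    have h1 : (0:ℝ) ≤ (|z.1| + 1) ^ (-a) := Real.rpow_nonneg (by positivity) _
    have h2 : (0:ℝ) ≤ (|z.2| + 1) ^ (-b) := Real.rpow_nonneg (by positivity) _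
    have h3 : (0:ℝ) ≤ (|z.1 + z.2| + 1) ^ (-c) := Real.rpow_nonneg (by positivity) _
    positivity
  have key : Integrable (fun x : ℝ × ℝ =>
        (|x.1| + 1) ^ (-a) * (|x.2| + 1) ^ (-b) * (|x.1 + x.2| + 1) ^ (-c)) ↔
      (∫⁻ y : ℝ, ∫⁻ v : ℝ, ENNReal.ofReal
        ((|y| + 1) ^ (-a) * (|v| + 1) ^ (-b) * (|y + v| + 1) ^ (-c))) ≠ ⊤ := by
    have tonelli : (∫⁻ z : ℝ × ℝ, ENNReal.ofReal
          ((|z.1| + 1) ^ (-a) * (|z.2| + 1) ^ (-b) * (|z.1 + z.2| + 1) ^ (-c)))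
        = ∫⁻ y : ℝ, ∫⁻ v : ℝ, ENNReal.ofReal
          ((|y| + 1) ^ (-a) * (|v| + 1) ^ (-b) * (|y + v| + 1) ^ (-c)) := by
      have hm : AEMeasurable (fun z : ℝ × ℝ => ENNReal.ofReal
          ((|z.1| + 1) ^ (-a) * (|z.2| + 1) ^ (-b) * (|z.1 + z.2| + 1) ^ (-c)))
          ((volume : Measure ℝ).prod volume) :=
        (ENNReal.measurable_ofReal.comp hφcont.measurable).aemeasurable
      rw [Measure.volume_eq_prod, lintegral_prod _ hm]
    rw [← tonelli]
    constructor
    · intro h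
      exact ((hasFiniteIntegral_iff_ofReal (ae_of_all _ hφpos)).1 h.2).ne
    · intro h
      exact ⟨hφcont.aestronglyMeasurable,
        (hasFiniteIntegral_iff_ofReal (ae_of_all _ hφpos)).2 (lt_top_iff_ne_top.2 h)⟩
  rw [key]
  constructor
  · intro h
    refine ⟨?_, ?_, ?_, ?_⟩ <;> by_contra hcon <;> push_neg at hcon
    · exact h (IntProdAbs.div_case3 hcon)
    · exact h (IntProdAbs.div_case2 hcon)
    · exact h (IntProdAbs.div_case1 hcon)
    · exact h (IntProdAbs.div_case4 hcon)
  · rintro ⟨hab, hac, hbc, habc⟩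
    exact IntProdAbs.suff hab hac hbc habc
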